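/- arXiv:1607.03212 — 4 statements merged into one kernel-verified Lean document; each statement's English description precedes it below -/
import Mathlib

section
/- Let & be a continuous t-norm on [0,1] with a non-trivial idempotent element a ∈ (0,1). Then there exists a D(Q)-category A (for Q = ([0,1],&,1)) and a Cauchy weight φ on A that is not forward Cauchy. Concretely: take b ∈ (a,1), let A have two objects x,y with A(x,x)=b and A(x,y)=A(y,x)=A(y,y)=0; then φ(x)=a, φ(y)=0 defines a Cauchy weight of type a with left adjoint ψ(x)=a, ψ(y)=0, but φ is not generated by any forward Cauchy net in A. -/
noncomputable def tres (f : ℝ → ℝ → ℝ) (x y : ℝ) : ℝ :=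
  sSup {z | z ∈ Set.Icc (0:ℝ) 1 ∧ f x z ≤ y}

def IsContTNorm (f : ℝ → ℝ → ℝ) : Prop :=
  (∀ a ∈ Set.Icc (0:ℝ) 1, ∀ b ∈ Set.Icc (0:ℝ) 1, f a b ∈ Set.Icc (0:ℝ) 1) ∧
  ContinuousOn (fun p : ℝ × ℝ => f p.1 p.2) (Set.Icc 0 1 ×ˢ Set.Icc 0 1) ∧
  (∀ a ∈ Set.Icc (0:ℝ) 1, ∀ b ∈ Set.Icc (0:ℝ) 1, f a b = f b a) ∧
  (∀ a ∈ Set.Icc (0:ℝ) 1, ∀ b ∈ Set.Icc (0:ℝ) 1, ∀ c ∈ Set.Icc (0:ℝ) 1,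
    f (f a b) c = f a (f b c)) ∧
  (∀ a ∈ Set.Icc (0:ℝ) 1, ∀ b ∈ Set.Icc (0:ℝ) 1, ∀ c ∈ Set.Icc (0:ℝ) 1,
    a ≤ b → f a c ≤ f b c) ∧
  (∀ a ∈ Set.Icc (0:ℝ) 1, f a 1 = a)

/-- A D(Q)-category (ordered fuzzy set) valued in `([0,1], f, 1)`. -/
def IsDCat {α : Type*} (f : ℝ → ℝ → ℝ) (A : α → α → ℝ) : Prop :=
  (∀ x y, A x y ∈ Set.Icc (0:ℝ) 1) ∧
  (∀ x y, A x y ≤ min (A x x) (A y y)) ∧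
  (∀ x y z, f (tres f (A y y) (A y z)) (A x y) ≤ A x z)

/-- A net is forward Cauchy if `lim_{ν ≥ μ} A(x_μ, x_ν)` exists. -/
def FwdCauchy {α : Type*} {Λ : Type*} [Preorder Λ] (A : α → α → ℝ) (x : Λ → α) : Prop :=
  ∃ L : ℝ, Filter.Tendsto (fun q : Λ × Λ => A (x q.1) (x q.2))
    (Filter.atTop ⊓ Filter.principal {q : Λ × Λ | q.1 ≤ q.2}) (nhds L)

/-- A net is biCauchy if `lim_{μ,ν} A(x_μ, x_ν)` exists. -/
def BiCauchy {α : Type*} {Λ : Type*} [Preorder Λ] (A : α → α → ℝ) (x : Λ → α) : Prop :=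
  ∃ L : ℝ, Filter.Tendsto (fun q : Λ × Λ => A (x q.1) (x q.2)) Filter.atTop (nhds L)

/-- The type `⋁_λ ⋀_{μ ≥ λ} A(x_μ, x_μ)` of a net. -/
noncomputable def genType {α : Type*} {Λ : Type*} [Preorder Λ]
    (A : α → α → ℝ) (x : Λ → α) : ℝ :=
  ⨆ l : Λ, ⨅ σ : {σ : Λ // l ≤ σ}, A (x σ.1) (x σ.1)

/-- The weight `⋁_λ ⋀_{μ ≥ λ} A(−, x_μ)` generated by a net. -/
noncomputable def genWeight {α : Type*} {Λ : Type*} [Preorder Λ]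
    (A : α → α → ℝ) (x : Λ → α) : α → ℝ :=
  fun u => ⨆ l : Λ, ⨅ σ : {σ : Λ // l ≤ σ}, A u (x σ.1)

/-- The coweight `⋁_λ ⋀_{μ ≥ λ} A(x_μ, −)` generated by a net. -/
noncomputable def genCoweight {α : Type*} {Λ : Type*} [Preorder Λ]
    (A : α → α → ℝ) (x : Λ → α) : α → ℝ :=
  fun v => ⨆ l : Λ, ⨅ σ : {σ : Λ // l ≤ σ}, A (x σ.1) v

/-- `s` is a Yoneda limit of the net `x`. -/
noncomputable def YonedaLim {α : Type*} {Λ : Type*} [Preorder Λ]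
    (A : α → α → ℝ) (x : Λ → α) (s : α) : Prop :=
  A s s = genType A x ∧ ∀ y, A s y = genCoweight A x y

/-- The two-object ordered fuzzy set with `A(x,x) = b` and all other homs `0`
(`true` plays the role of `x`, `false` of `y`). -/
def A14 (b : ℝ) : Bool → Bool → ℝ := fun u v => if u = true ∧ v = true then b else 0

/-- The weight `φ(x) = a`, `φ(y) = 0` (which is also the left adjoint coweight `ψ`). -/
def phi14 (a : ℝ) : Bool → ℝ := fun u => if u = true then a else 0


section Aux14

lemma fzero14 {f : ℝ → ℝ → ℝ} (ht : IsContTNorm f) {c : ℝ} (hc : c ∈ Set.Icc (0:ℝ) 1) :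
    f c 0 = 0 := by
  obtain ⟨hmem, _, hcomm, _, hmono, hunit⟩ := ht
  have h01 : (0:ℝ) ∈ Set.Icc (0:ℝ) 1 := ⟨le_refl 0, zero_le_one⟩
  have h11 : (1:ℝ) ∈ Set.Icc (0:ℝ) 1 := ⟨zero_le_one, le_refl 1⟩
  have h1 : f c 0 ≤ f 1 0 := hmono c hc 1 h11 0 h01 hc.2
  have h2 : f 1 0 = 0 := by rw [hcomm 1 h11 0 h01]; exact hunit 0 h01
  have h3 := (hmem c hc 0 h01).1
  linarith

lemma tres_spec14 {f : ℝ → ℝ → ℝ} (ht : IsContTNorm f) {c d : ℝ}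
    (hc : c ∈ Set.Icc (0:ℝ) 1) (hd : 0 ≤ d) :
    tres f c d ∈ Set.Icc (0:ℝ) 1 ∧ f c (tres f c d) ≤ d := by
  have h0S : (0:ℝ) ∈ {z | z ∈ Set.Icc (0:ℝ) 1 ∧ f c z ≤ d} :=
    ⟨⟨le_refl 0, zero_le_one⟩, by rw [fzero14 ht hc]; exact hd⟩
  have hbdd : BddAbove {z | z ∈ Set.Icc (0:ℝ) 1 ∧ f c z ≤ d} :=
    ⟨1, fun z hz => hz.1.2⟩
  have hcont2 : ContinuousOn (fun z : ℝ => f c z) (Set.Icc 0 1) := by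
    have hpair : ContinuousOn (fun z : ℝ => ((c, z) : ℝ × ℝ)) (Set.Icc 0 1) :=
      (Continuous.prodMk_right c).continuousOn
    exact ht.2.1.comp hpair (fun z hz => ⟨hc, hz⟩)
  have hclosed : IsClosed {z | z ∈ Set.Icc (0:ℝ) 1 ∧ f c z ≤ d} := by
    have h := hcont2.preimage_isClosed_of_isClosed isClosed_Icc (isClosed_Iic (a := d))
    have hset : {z | z ∈ Set.Icc (0:ℝ) 1 ∧ f c z ≤ d}
        = Set.Icc (0:ℝ) 1 ∩ (fun z : ℝ => f c z) ⁻¹' Set.Iic d := by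
      rfl
    rw [hset]
    exact h
  have hm : sSup {z | z ∈ Set.Icc (0:ℝ) 1 ∧ f c z ≤ d} ∈
      {z | z ∈ Set.Icc (0:ℝ) 1 ∧ f c z ≤ d} := hclosed.csSup_mem ⟨0, h0S⟩ hbdd
  exact ⟨hm.1, hm.2⟩

lemma tres_ge14 {f : ℝ → ℝ → ℝ} {c d z : ℝ} (hz : z ∈ Set.Icc (0:ℝ) 1)
    (hfz : f c z ≤ d) : z ≤ tres f c d :=
  le_csSup ⟨1, fun w hw => hw.1.2⟩ ⟨hz, hfz⟩

end Aux14

/-- if `a ∈ (0,1)` is a non-trivial idempotent of `f` and `b ∈ (a,1)`,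
then `A14 b` is a D(Q)-category, `phi14 a` is a Cauchy weight of type `a` on it
(with left adjoint `phi14 a`), yet `phi14 a` is not generated by any forward
Cauchy net. -/
theorem stmt14 (f : ℝ → ℝ → ℝ) (ht : IsContTNorm f)
    (a : ℝ) (ha : a ∈ Set.Ioo (0:ℝ) 1) (hid : f a a = a)
    (b : ℝ) (hb : b ∈ Set.Ioo a 1) :
    IsDCat f (A14 b) ∧
    -- φ is a weight of type a and ψ := φ is a coweight of type a
    (∀ u, phi14 a u ≤ min a (A14 b u u)) ∧
    (∀ u v, f (tres f (A14 b v v) (phi14 a v)) (A14 b u v) ≤ phi14 a u) ∧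
    (∀ u v, f (tres f (A14 b u u) (A14 b u v)) (phi14 a u) ≤ phi14 a v) ∧
    -- adjunction: ψ ∘ φ ≤ A and φ ∘ ψ ≥ a, so φ is Cauchy
    (∀ u v, f (tres f a (phi14 a v)) (phi14 a u) ≤ A14 b u v) ∧
    (a ≤ ⨆ u : Bool, f (tres f (A14 b u u) (phi14 a u)) (phi14 a u)) ∧
    -- but φ is not forward Cauchy: no forward Cauchy net generates it
    ¬ ∃ (Λ : Type) (le : Λ → Λ → Prop),
        (∀ l, le l l) ∧ (∀ i j k, le i j → le j k → le i k) ∧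
        (∀ i j, ∃ k, le i k ∧ le j k) ∧ Nonempty Λ ∧
        ∃ x : Λ → Bool,
          (∃ L : ℝ, ∀ ε > (0:ℝ), ∃ l₀ : Λ, ∀ μ ν : Λ, le l₀ μ → le μ ν →
            |A14 b (x μ) (x ν) - L| < ε) ∧
          (∀ u, phi14 a u = ⨆ l : Λ, ⨅ σ : {σ : Λ // le l σ}, A14 b u (x σ.1)) ∧
          (a = ⨆ l : Λ, ⨅ σ : {σ : Λ // le l σ}, A14 b (x σ.1) (x σ.1)) := by
  
  have h01 : (0:ℝ) ∈ Set.Icc (0:ℝ) 1 := ⟨le_refl 0, zero_le_one⟩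
  have h11 : (1:ℝ) ∈ Set.Icc (0:ℝ) 1 := ⟨zero_le_one, le_refl 1⟩
  have haI : a ∈ Set.Icc (0:ℝ) 1 := ⟨le_of_lt ha.1, le_of_lt ha.2⟩
  have hbI : b ∈ Set.Icc (0:ℝ) 1 := ⟨le_of_lt (lt_trans ha.1 hb.1), le_of_lt hb.2⟩
  obtain ⟨hmem, hcont, hcomm, hassoc, hmono, hunit⟩ := id ht
  have hApos : ∀ u v : Bool, 0 ≤ A14 b u v := by
    intro u v; rcases u <;> rcases v <;> simp [A14] <;> linarith [ha.1, hb.1]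
  have hAI : ∀ u v : Bool, A14 b u v ∈ Set.Icc (0:ℝ) 1 := by
    intro u v; rcases u <;> rcases v <;> simp [A14, Set.mem_Icc] <;>
      constructor <;> linarith [ha.1, hb.1, hb.2]
  -- tres facts
  have htbb : tres f b b = 1 := by
    have h1 : (1:ℝ) ≤ tres f b b := tres_ge14 h11 (le_of_eq (hunit b hbI))
    have h2 := (tres_spec14 ht hbI hbI.1).1.2
    linarith
  have htaa : tres f a a = 1 := by
    have h1 : (1:ℝ) ≤ tres f a a := tres_ge14 h11 (le_of_eq (hunit a haI))
    have h2 := (tres_spec14 ht haI haI.1).1.2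
    linarith
  have htba_mem := (tres_spec14 ht hbI haI.1).1
  have htba_le : f b (tres f b a) ≤ a := (tres_spec14 ht hbI haI.1).2
  have htba_ge : a ≤ tres f b a := by
    apply tres_ge14 haI
    calc f b a ≤ f 1 a := hmono b hbI 1 h11 a haI hbI.2
    _ = f a 1 := hcomm 1 h11 a haI
    _ = a := hunit a haI
  have htb0_mem := (tres_spec14 ht hbI (le_refl 0)).1
  have htb0_le : f b (tres f b 0) ≤ 0 := (tres_spec14 ht hbI (le_refl 0)).2
  have hta0_mem := (tres_spec14 ht haI (le_refl 0)).1
  have hta0_le : f a (tres f a 0) ≤ 0 := (tres_spec14 ht haI (le_refl 0)).2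
  have i00 : (0:ℝ) ≤ (0:ℝ) := le_refl 0
  have ht00_mem := (tres_spec14 ht h01 i00).1
  have f1a : f 1 a = a := by rw [hcomm 1 h11 a haI]; exact hunit a haI
  have f1b : f 1 b = b := by rw [hcomm 1 h11 b hbI]; exact hunit b hbI
  have hz : ∀ {c d : ℝ}, c ∈ Set.Icc (0:ℝ) 1 → 0 ≤ d → ∀ {e : ℝ}, 0 ≤ e →
      f (tres f c d) 0 ≤ e := by
    intro c d hc hd e he
    rw [fzero14 ht (tres_spec14 ht hc hd).1]
    exact he
  have hk1 : f (tres f b 0) b ≤ 0 := by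
    calc f (tres f b 0) b = f b (tres f b 0) := hcomm _ htb0_mem b hbI
    _ ≤ 0 := htb0_le
  have hk2 : f (tres f b a) b ≤ a := by
    calc f (tres f b a) b = f b (tres f b a) := hcomm _ htba_mem b hbI
    _ ≤ a := htba_le
  have hk3 : f (tres f b 0) a ≤ 0 := by
    calc f (tres f b 0) a = f a (tres f b 0) := hcomm _ htb0_mem a haI
    _ ≤ f b (tres f b 0) := hmono a haI b hbI _ htb0_mem (le_of_lt hb.1)
    _ ≤ 0 := htb0_le
  have hk4 : f (tres f a 0) a ≤ 0 := by
    calc f (tres f a 0) a = f a (tres f a 0) := hcomm _ hta0_mem a haI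
    _ ≤ 0 := hta0_le
  have hk5 : f (tres f b b) b ≤ b := by rw [htbb, f1b]
  have hk6 : f (tres f b b) a ≤ a := by rw [htbb, f1a]
  have hk7 : f (tres f a a) a ≤ b := by rw [htaa, f1a]; exact le_of_lt hb.1
  refine ⟨⟨hAI, ?_, ?_⟩, ?_, ?_, ?_, ?_, ?_, ?_⟩
  · intro u v
    rcases u <;> rcases v <;> simp [A14] <;> linarith [ha.1, hb.1]
  · intro u v w
    rcases u <;> rcases v <;> rcases w <;> simp [A14] <;>
      first
        | exact hz h01 i00 (le_refl 0)
        | exact hz h01 i00 hbI.1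
        | exact hz hbI i00 (le_refl 0)
        | exact hz hbI hbI.1 (le_refl 0)
        | exact hk1
        | exact hk5
  · intro u
    rcases u <;> simp [phi14, A14] <;>
      first
        | exact le_min (le_of_lt ha.1) (le_refl 0)
        | exact le_min (le_refl a) (le_of_lt hb.1)
        | exact le_of_lt ha.1
        | exact le_of_lt hb.1
        | constructor <;> linarith [ha.1, hb.1]
  · intro u v
    rcases u <;> rcases v <;> simp [A14, phi14] <;>
      first
        | exact hz h01 i00 (le_refl 0)
        | exact hz hbI haI.1 (le_refl 0)
        | exact hz h01 i00 haI.1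
        | exact hk2
  · intro u v
    rcases u <;> rcases v <;> simp [A14, phi14] <;>
      first
        | exact hz h01 i00 (le_refl 0)
        | exact hz h01 i00 haI.1
        | exact hk3
        | exact hk6
  · intro u v
    rcases u <;> rcases v <;> simp [A14, phi14] <;>
      first
        | exact hz haI i00 (le_refl 0)
        | exact hz haI haI.1 (le_refl 0)
        | exact hk4
        | exact hk7
  · have hkey : a ≤ f (tres f (A14 b true true) (phi14 a true)) (phi14 a true) := by
      simp only [A14, phi14, if_pos (And.intro rfl rfl), if_pos rfl]
      calc a = f a a := hid.symm
      _ ≤ f (tres f b a) a := hmono a haI _ htba_mem a haI htba_ge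
    exact le_trans hkey (le_ciSup (f := fun u : Bool =>
      f (tres f (A14 b u u) (phi14 a u)) (phi14 a u))
      ((Set.finite_range _).bddAbove) true)
  · rintro ⟨Λ, le, hrefl, htrans, hdir, ⟨l0⟩, x, hfc, hgen, htype⟩
    haveI : Nonempty Λ := ⟨l0⟩
    have hne : ∀ l : Λ, Nonempty {σ : Λ // le l σ} := fun l => ⟨⟨l, hrefl l⟩⟩
    set g : Λ → ℝ := fun l => ⨅ σ : {σ : Λ // le l σ}, A14 b (x σ.1) (x σ.1) with hg
    have hAd : ∀ u : Bool, A14 b u u ≤ b := by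
      intro u; rcases u <;> simp [A14]; linarith [ha.1, hb.1]
    have hbddB : ∀ l : Λ, BddBelow (Set.range fun σ : {σ : Λ // le l σ} =>
        A14 b (x σ.1) (x σ.1)) := by
      intro l
      refine ⟨0, ?_⟩
      rintro _ ⟨σ, rfl⟩
      exact hApos _ _
    have hgle : ∀ l, g l ≤ b := by
      intro l
      have := ciInf_le (hbddB l) (⟨l, hrefl l⟩ : {σ : Λ // le l σ})
      exact le_trans this (hAd _)
    by_cases hcase : ∃ l : Λ, ∀ σ : Λ, le l σ → x σ = true
    · obtain ⟨l, hl⟩ := hcase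
      have hglb : b ≤ g l := by
        have := hne l
        apply le_ciInf
        intro σ
        rw [hl σ.1 σ.2]
        simp [A14]
      have hab : b ≤ a := by
        rw [htype]
        refine le_trans hglb (le_ciSup ?_ l)
        refine ⟨b, ?_⟩
        rintro _ ⟨l', rfl⟩
        exact hgle l'
      linarith [hb.1]
    · push_neg at hcase
      have hga : ∀ l, g l ≤ 0 := by
        intro l
        obtain ⟨σ, hσle, hσf⟩ := hcase l
        have := ciInf_le (hbddB l) (⟨σ, hσle⟩ : {σ : Λ // le l σ})
        refine le_trans this ?_
        simp [A14, hσf]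
      have : a ≤ 0 := by
        rw [htype]
        exact ciSup_le hga
      linarith [ha.1]
end

section
/- Let X be a generalized partial metric space and φ a weight on X with finite type tφ < ∞. If φ is flat, then φ satisfies: (a) inf over x with φ(x) < ∞ of (φ(x) − X(x,x)) equals 0; and (b) whenever φ(x_i) < X(x_i,x_i) + δ_i for i=1,2, there exist y ∈ X and ε > 0 with φ(y) < X(y,y) + ε and X(x_i,y) + ε < X(x_i,x_i) + δ_i for i=1,2. -/
open Filter Topology
open scoped ENNReal

/-- Coweights of type `b` on a generalized partial metric space `p`. -/
def IsCoweightGPM {X : Type*} (p : X → X → ℝ≥0∞) (b : ℝ≥0∞) (ψ : X → ℝ≥0∞) : Prop :=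
  (∀ x, max (p x x) b ≤ ψ x) ∧ ∀ x y, ψ y ≤ p x y + (ψ x - p x x)

/-- Composition `φ ∘ ψ` of a weight after a coweight. -/
noncomputable def compGPM {X : Type*} (p : X → X → ℝ≥0∞) (φ ψ : X → ℝ≥0∞) : ℝ≥0∞ :=
  ⨅ x, φ x + (ψ x - p x x)

private lemma aux_addsub (a b c : ℝ≥0∞) (h : c ≤ b) (hc : c ≠ ⊤) :
    a + (b - c) = a + b - c := by
  rw [add_comm a (b - c), ENNReal.sub_add_eq_add_sub h hc, add_comm b a]

/-- the coweight generated by a point (shifted by `e`) is a coweight of any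
admissible type `b`. -/
private lemma aux_point_coweight {X : Type*} (p : X → X → ℝ≥0∞)
    (h1 : ∀ x y, p x x ≤ p x y) (h1' : ∀ x y, p y y ≤ p x y)
    (h2 : ∀ x y z, p x z ≤ p y z + (p x y - p y y))
    (x₀ : X) (e b : ℝ≥0∞) (hb : b ≤ p x₀ x₀ + e) :
    IsCoweightGPM p b (fun z => p x₀ z + e) := by
  constructor
  · intro z
    refine max_le (le_trans (h1' x₀ z) le_self_add) (hb.trans ?_)
    exact add_le_add_left (h1 x₀ z) e
  · intro z w
    by_cases hzz : p z z = ⊤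
    · have : p z w = ⊤ := top_le_iff.mp (hzz ▸ h1 z w)
      simp [this]
    · have key : p x₀ z + e - p z z = (p x₀ z - p z z) + e :=
        (ENNReal.sub_add_eq_add_sub (h1' x₀ z) hzz).symm
      rw [key, ← add_assoc]
      exact add_le_add_left (h2 x₀ z w) e

/-- composition of the weight with a point-generated coweight. -/
private lemma aux_point_comp {X : Type*} (p : X → X → ℝ≥0∞)
    (h1' : ∀ x y, p y y ≤ p x y) (φ : X → ℝ≥0∞)
    (hw1 : ∀ x y, φ x ≤ p x y + (φ y - p y y))
    (hpz : ∀ z, p z z ≤ φ z)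
    (x₀ : X) (e : ℝ≥0∞) (hx₀ : p x₀ x₀ ≠ ⊤) :
    compGPM p φ (fun z => p x₀ z + e) = φ x₀ + e := by
  refine le_antisymm ?_ (le_iInf fun z => ?_)
  · refine le_trans (iInf_le _ x₀) ?_
    rw [ENNReal.add_sub_cancel_left hx₀]
  · by_cases hzz : p z z = ⊤
    · have : φ z = ⊤ := top_le_iff.mp (hzz ▸ hpz z)
      rw [this, top_add]; exact le_top
    · have key : (p x₀ z + e : ℝ≥0∞) - p z z = (p x₀ z - p z z) + e :=
        (ENNReal.sub_add_eq_add_sub (h1' x₀ z) hzz).symm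
      rw [key, ← add_assoc]
      refine add_le_add_left ?_ e
      calc φ x₀ ≤ p x₀ z + (φ z - p z z) := hw1 x₀ z
        _ = p x₀ z + φ z - p z z := aux_addsub _ _ _ (hpz z) hzz
        _ = φ z + p x₀ z - p z z := by rw [add_comm]
        _ = φ z + (p x₀ z - p z z) := (aux_addsub _ _ _ (h1' x₀ z) hzz).symm

/-- a flat weight `φ` of finite type on a generalized partial metric
space satisfies conditions (a) and (b). -/
theorem stmt16 {X : Type*} (p : X → X → ℝ≥0∞)
    (h1 : ∀ x y, p x x ≤ p x y) (h1' : ∀ x y, p y y ≤ p x y)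
    (h2 : ∀ x y z, p x z ≤ p y z + (p x y - p y y))
    (tφ : ℝ≥0∞) (htφ : tφ < ⊤) (φ : X → ℝ≥0∞)
    (hw1 : ∀ x y, φ x ≤ p x y + (φ y - p y y))
    (hw2 : ∀ x, max (p x x) tφ ≤ φ x)
    -- flatness: φ∘(−) preserves finite meets of coweights of each type b
    (hflat1 : ∀ b : ℝ≥0∞, compGPM p φ (fun x => max b (p x x)) = max b tφ)
    (hflat2 : ∀ (b : ℝ≥0∞) (ψ₁ ψ₂ : X → ℝ≥0∞), IsCoweightGPM p b ψ₁ → IsCoweightGPM p b ψ₂ →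
      compGPM p φ (fun x => max (ψ₁ x) (ψ₂ x)) = max (compGPM p φ ψ₁) (compGPM p φ ψ₂)) :
    ((⨅ x : {x : X // φ x < ⊤}, (φ x.1 - p x.1 x.1)) = 0) ∧
    (∀ (x₁ x₂ : X) (δ₁ δ₂ : ℝ≥0∞), φ x₁ < p x₁ x₁ + δ₁ → φ x₂ < p x₂ x₂ + δ₂ →
      ∃ (y : X) (ε : ℝ≥0∞), 0 < ε ∧ φ y < p y y + ε ∧
        p x₁ y + ε < p x₁ x₁ + δ₁ ∧ p x₂ y + ε < p x₂ x₂ + δ₂) := by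
  have hpz : ∀ z, p z z ≤ φ z := fun z => le_trans (le_max_left _ _) (hw2 z)
  constructor
  · -- part (a)
    have key := hflat1 tφ
    rw [max_self] at key
    unfold compGPM at key
    refine le_antisymm (ENNReal.le_of_forall_pos_le_add fun ε hε _ => ?_) zero_le
    have hεne : (ε : ℝ≥0∞) ≠ 0 := by exact_mod_cast hε.ne'
    have hlt : (⨅ x, φ x + (max tφ (p x x) - p x x)) < tφ + ε := by
      rw [key]; exact ENNReal.lt_add_right htφ.ne hεne
    obtain ⟨x, hx⟩ := iInf_lt_iff.mp hlt
    have hφx : φ x < ⊤ :=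
      lt_of_le_of_lt (le_self_add.trans hx.le)
        (ENNReal.add_lt_top.mpr ⟨htφ, ENNReal.coe_lt_top⟩)
    have hbound : φ x - p x x ≤ (0 : ℝ≥0∞) + ε := by
      rw [zero_add]
      rcases le_total (p x x) tφ with hc | hc
      · have hpne : p x x ≠ ⊤ := (hc.trans_lt htφ).ne
        rw [max_eq_left hc, aux_addsub _ _ _ hc hpne,
          ← ENNReal.sub_add_eq_add_sub (le_trans (le_max_left _ _) (hw2 x)) hpne,
          add_comm tφ ε] at hx
        exact ((ENNReal.add_lt_add_iff_right htφ.ne).mp hx).le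
      · rw [max_eq_right hc, tsub_self, add_zero] at hx
        have hlt2 : φ x < p x x + ε := hx.trans_le (add_le_add_left hc _)
        have hle2 : φ x ≤ ε + p x x := by rw [add_comm]; exact hlt2.le
        exact tsub_le_iff_right.mpr hle2
    exact le_trans (iInf_le _ ⟨x, hφx⟩) hbound
  · -- part (b)
    intro x₁ x₂ δ₁ δ₂ hx₁ hx₂
    have hφ1 : φ x₁ ≠ ⊤ := hx₁.ne_top
    have hφ2 : φ x₂ ≠ ⊤ := hx₂.ne_top
    have hp1 : p x₁ x₁ ≠ ⊤ := ne_top_of_le_ne_top hφ1 (hpz x₁)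
    have hp2 : p x₂ x₂ ≠ ⊤ := ne_top_of_le_ne_top hφ2 (hpz x₂)
    have hd₁ : φ x₁ - p x₁ x₁ < δ₁ :=
      (ENNReal.sub_lt_iff_lt_right hp1 (hpz x₁)).mpr (by rwa [add_comm δ₁ (p x₁ x₁)])
    have hd₂ : φ x₂ - p x₂ x₂ < δ₂ :=
      (ENNReal.sub_lt_iff_lt_right hp2 (hpz x₂)).mpr (by rwa [add_comm δ₂ (p x₂ x₂)])
    obtain ⟨r₁, hr₁, hdr₁⟩ := ENNReal.lt_iff_exists_add_pos_lt.mp hd₁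
    obtain ⟨r₂, hr₂, hdr₂⟩ := ENNReal.lt_iff_exists_add_pos_lt.mp hd₂
    set ε' : ℝ≥0∞ := ((min r₁ r₂ : NNReal) : ℝ≥0∞) / 2 with hε'def
    have hmin : (0 : NNReal) < min r₁ r₂ := lt_min hr₁ hr₂
    have hε'0 : 0 < ε' := ENNReal.half_pos (by exact_mod_cast hmin.ne')
    have hε'top : ε' ≠ ⊤ :=
      ne_top_of_le_ne_top ENNReal.coe_ne_top (ENNReal.half_le_self)
    have hee : ε' + ε' = ((min r₁ r₂ : NNReal) : ℝ≥0∞) := ENNReal.add_halves _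
    have he₁ : φ x₁ - p x₁ x₁ + (ε' + ε') < δ₁ := by
      rw [hee]
      exact lt_of_le_of_lt
        (add_le_add_right (by exact_mod_cast min_le_left r₁ r₂) _) hdr₁
    have he₂ : φ x₂ - p x₂ x₂ + (ε' + ε') < δ₂ := by
      rw [hee]
      exact lt_of_le_of_lt
        (add_le_add_right (by exact_mod_cast min_le_right r₁ r₂) _) hdr₂
    set M : ℝ≥0∞ := max (φ x₁) (φ x₂) with hMdef
    have hM : M ≠ ⊤ := by
      rw [hMdef, ne_eq, max_eq_top]; tauto
    set e₁ : ℝ≥0∞ := M - φ x₁ with he₁def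
    set e₂ : ℝ≥0∞ := M - φ x₂ with he₂def
    have hMe₁ : φ x₁ + e₁ = M := add_tsub_cancel_of_le (le_max_left _ _)
    have hMe₂ : φ x₂ + e₂ = M := add_tsub_cancel_of_le (le_max_right _ _)
    have he₁top : e₁ ≠ ⊤ := ne_top_of_le_ne_top hM tsub_le_self
    have he₂top : e₂ ≠ ⊤ := ne_top_of_le_ne_top hM tsub_le_self
    set b : ℝ≥0∞ := min (p x₁ x₁ + e₁) (p x₂ x₂ + e₂) with hbdef
    have cow1 := aux_point_coweight p h1 h1' h2 x₁ e₁ b (min_le_left _ _)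
    have cow2 := aux_point_coweight p h1 h1' h2 x₂ e₂ b (min_le_right _ _)
    have key := hflat2 b _ _ cow1 cow2
    rw [aux_point_comp p h1' φ hw1 hpz x₁ e₁ hp1,
      aux_point_comp p h1' φ hw1 hpz x₂ e₂ hp2, hMe₁, hMe₂, max_self] at key
    unfold compGPM at key
    have hlt : (⨅ z, φ z + (max (p x₁ z + e₁) (p x₂ z + e₂) - p z z)) < M + ε' := by
      rw [key]; exact ENNReal.lt_add_right hM hε'0.ne'
    obtain ⟨y, hy⟩ := iInf_lt_iff.mp hlt
    have hMε : M + ε' ≠ ⊤ := ENNReal.add_ne_top.mpr ⟨hM, hε'top⟩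
    have hφy : φ y ≠ ⊤ :=
      ne_top_of_le_ne_top hMε (le_self_add.trans hy.le)
    have hpy : p y y ≠ ⊤ := ne_top_of_le_ne_top hφy (hpz y)
    -- main estimate, uniform in the two points
    have main : ∀ (x : X) (e : ℝ≥0∞), e ≠ ⊤ →
        (p x y + e ≤ max (p x₁ y + e₁) (p x₂ y + e₂)) → φ x + e = M →
        (φ y - p y y) + p x y < φ x + ε' := by
      intro x e hetop hle hMe
      have h' : φ y + (p x y + e - p y y) < M + ε' :=
        lt_of_le_of_lt (add_le_add_right (tsub_le_tsub_right hle _) _) hy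
      have hple : p y y ≤ p x y + e := le_trans (h1' x y) le_self_add
      rw [aux_addsub _ _ _ hple hpy,
        ← ENNReal.sub_add_eq_add_sub (hpz y) hpy] at h'
      -- h' : (φ y - p y y) + (p x y + e) < M + ε'
      rw [← hMe, add_right_comm (φ x) e ε', ← add_assoc] at h'
      exact (ENNReal.add_lt_add_iff_right hetop).mp h'
    have hfin₁ : (φ y - p y y) + p x₁ y < φ x₁ + ε' :=
      main x₁ e₁ he₁top (le_max_left _ _) hMe₁
    have hfin₂ : (φ y - p y y) + p x₂ y < φ x₂ + ε' :=
      main x₂ e₂ he₂top (le_max_right _ _) hMe₂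
    refine ⟨y, (φ y - p y y) + ε', lt_of_lt_of_le hε'0 le_add_self, ?_, ?_, ?_⟩
    · rw [← add_assoc, add_tsub_cancel_of_le (hpz y)]
      exact ENNReal.lt_add_right hφy hε'0.ne'
    · calc p x₁ y + ((φ y - p y y) + ε')
          = ((φ y - p y y) + p x₁ y) + ε' := by ring
        _ < (φ x₁ + ε') + ε' := (ENNReal.add_lt_add_iff_right hε'top).mpr hfin₁
        _ = (p x₁ x₁ + (φ x₁ - p x₁ x₁)) + (ε' + ε') := by
            rw [add_tsub_cancel_of_le (hpz x₁)]; ring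
        _ = p x₁ x₁ + ((φ x₁ - p x₁ x₁) + (ε' + ε')) := by ring
        _ < p x₁ x₁ + δ₁ := by
            rw [ENNReal.add_lt_add_iff_left hp1]; exact he₁
    · calc p x₂ y + ((φ y - p y y) + ε')
          = ((φ y - p y y) + p x₂ y) + ε' := by ring
        _ < (φ x₂ + ε') + ε' := (ENNReal.add_lt_add_iff_right hε'top).mpr hfin₂
        _ = (p x₂ x₂ + (φ x₂ - p x₂ x₂)) + (ε' + ε') := by
            rw [add_tsub_cancel_of_le (hpz x₂)]; ring
        _ = p x₂ x₂ + ((φ x₂ - p x₂ x₂) + (ε' + ε')) := by ring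
        _ < p x₂ x₂ + δ₂ := by
            rw [ENNReal.add_lt_add_iff_left hp2]; exact he₂
end

section
/- Let X be a generalized partial metric space and φ a weight on X with tφ < ∞ satisfying: (a) inf over x with φ(x)<∞ of (φ(x)−X(x,x)) = 0, and (b) whenever φ(x_i) < X(x_i,x_i)+δ_i (i=1,2) there exist y and ε>0 with φ(y) < X(y,y)+ε and X(x_i,y)+ε < X(x_i,x_i)+δ_i. Then φ is forward Cauchy: there exists a forward Cauchy net {x_λ} with φ(x) = inf_λ sup_{σ≥λ} X(x,x_σ) for all x. Specifically, the set D = {(z,r) : φ(z) < X(z,z)+r} directed by (z,r) ⊑ (z',r') iff X(z,z')+r' ≤ X(z,z)+r yields such a net via projection to the first coordinate. -/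
open Filter Topology
open scoped ENNReal

/-- The directed set `D = {(z,r) : φ(z) < X(z,z) + r}`. -/
def D17 {X : Type*} (p : X → X → ℝ≥0∞) (φ : X → ℝ≥0∞) : Type _ :=
  {q : X × ℝ≥0∞ // φ q.1 < p q.1 q.1 + q.2}

/-- The order `(z,r) ⊑ (z',r')` iff `X(z,z') + r' ≤ X(z,z) + r`. -/
def R17 {X : Type*} (p : X → X → ℝ≥0∞) (d e : X × ℝ≥0∞) : Prop :=
  p d.1 e.1 + e.2 ≤ p d.1 d.1 + d.2

/-- The filter of sections of `(D,⊑)` (the "atTop" filter of the directed set `D`). -/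
def F17 {X : Type*} (p : X → X → ℝ≥0∞) (φ : X → ℝ≥0∞) : Filter (D17 p φ) :=
  ⨅ d : D17 p φ, 𝓟 {e : D17 p φ | R17 p d.1 e.1}

/-- a weight of finite type satisfying (a) and (b) is forward Cauchy:
the net `D ∋ (z,r) ↦ z` (with `D` as above) is forward Cauchy and generates `φ`. -/
theorem stmt17 {X : Type*} (p : X → X → ℝ≥0∞)
    (h1 : ∀ x y, p x x ≤ p x y) (h1' : ∀ x y, p y y ≤ p x y)
    (h2 : ∀ x y z, p x z ≤ p y z + (p x y - p y y))
    (tφ : ℝ≥0∞) (htφ : tφ < ⊤) (φ : X → ℝ≥0∞)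
    (hw1 : ∀ x y, φ x ≤ p x y + (φ y - p y y))
    (hw2 : ∀ x, max (p x x) tφ ≤ φ x)
    (ha : (⨅ x : {x : X // φ x < ⊤}, (φ x.1 - p x.1 x.1)) = 0)
    (hb : ∀ (x₁ x₂ : X) (δ₁ δ₂ : ℝ≥0∞), φ x₁ < p x₁ x₁ + δ₁ → φ x₂ < p x₂ x₂ + δ₂ →
      ∃ (y : X) (ε : ℝ≥0∞), 0 < ε ∧ φ y < p y y + ε ∧
        p x₁ y + ε < p x₁ x₁ + δ₁ ∧ p x₂ y + ε < p x₂ x₂ + δ₂) :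
    -- `(D,⊑)` is a directed preorder
    (∀ d : D17 p φ, R17 p d.1 d.1) ∧
    (∀ d e g : D17 p φ, R17 p d.1 e.1 → R17 p e.1 g.1 → R17 p d.1 g.1) ∧
    (∀ d e : D17 p φ, ∃ g : D17 p φ, R17 p d.1 g.1 ∧ R17 p e.1 g.1) ∧
    -- the net is forward Cauchy: the doubly-indexed net over comparable pairs converges
    (∃ L : ℝ≥0∞, Tendsto (fun q : D17 p φ × D17 p φ => p q.1.1.1 q.2.1.1)
      (((F17 p φ) ×ˢ (F17 p φ)) ⊓ 𝓟 {q : D17 p φ × D17 p φ | R17 p q.1.1 q.2.1}) (𝓝 L)) ∧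
    -- it generates φ: φ = inf_λ sup_{σ ⊒ λ} X(−, x_σ)
    (∀ u : X, φ u = ⨅ d : D17 p φ, ⨆ e : {e : D17 p φ // R17 p d.1 e.1}, p u e.1.1.1) := by
  have hrefl : ∀ d : D17 p φ, R17 p d.1 d.1 := fun d => le_rfl
  have htrans : ∀ d e g : X × ℝ≥0∞, R17 p d e → R17 p e g → R17 p d g := by
    intro d e g hde heg
    unfold R17 at *
    calc p d.1 g.1 + g.2 ≤ (p e.1 g.1 + (p d.1 e.1 - p e.1 e.1)) + g.2 :=
           add_le_add_left (h2 d.1 e.1 g.1) _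
      _ = (p d.1 e.1 - p e.1 e.1) + (p e.1 g.1 + g.2) := by ring
      _ ≤ (p d.1 e.1 - p e.1 e.1) + (p e.1 e.1 + e.2) := add_le_add_right heg _
      _ = ((p d.1 e.1 - p e.1 e.1) + p e.1 e.1) + e.2 := (add_assoc _ _ _).symm
      _ = p d.1 e.1 + e.2 := by rw [tsub_add_cancel_of_le (h1' d.1 e.1)]
      _ ≤ _ := hde
  have hdir : ∀ d e : D17 p φ, ∃ g : D17 p φ, R17 p d.1 g.1 ∧ R17 p e.1 g.1 := by
    intro d e
    obtain ⟨y, ε, hε, hy, hd, he⟩ := hb d.1.1 e.1.1 d.1.2 e.1.2 d.2 e.2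
    exact ⟨⟨(y, ε), hy⟩, hd.le, he.le⟩
  have hV : ∀ d e : X × ℝ≥0∞, R17 p d e → p e.1 e.1 + e.2 ≤ p d.1 d.1 + d.2 :=
    fun d e hde => le_trans (add_le_add_left (h1' d.1 e.1) _) hde
  have hsmall : ∀ η : ℝ≥0∞, 0 < η → ∃ d : D17 p φ, d.1.2 = η ∧ p d.1.1 d.1.1 ≠ ∞ ∧
      ∀ e : X × ℝ≥0∞, R17 p d.1 e → e.2 ≤ η := by
    intro η hη
    have h0 : (⨅ x : {x : X // φ x < ⊤}, (φ x.1 - p x.1 x.1)) < η := by rw [ha]; exact hη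
    obtain ⟨⟨x₀, hfin⟩, hx₀⟩ := iInf_lt_iff.mp h0
    have hp : p x₀ x₀ ≤ φ x₀ := le_trans (le_max_left _ _) (hw2 x₀)
    have hpfin : p x₀ x₀ ≠ ∞ := (lt_of_le_of_lt hp hfin).ne
    have hmem : φ x₀ < p x₀ x₀ + η := by
      calc φ x₀ ≤ (φ x₀ - p x₀ x₀) + p x₀ x₀ := le_tsub_add
        _ < η + p x₀ x₀ := (ENNReal.add_lt_add_iff_right hpfin).mpr hx₀
        _ = p x₀ x₀ + η := add_comm _ _
    refine ⟨⟨(x₀, η), hmem⟩, rfl, hpfin, ?_⟩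
    intro e he
    have h3 : p x₀ x₀ + e.2 ≤ p x₀ x₀ + η :=
      le_trans (add_le_add_left (h1 x₀ e.1) _) he
    exact (ENNReal.add_le_add_iff_left hpfin).mp h3
  refine ⟨hrefl, fun d e g => htrans d.1 e.1 g.1, hdir, ?_, ?_⟩
  · -- forward Cauchy
    obtain ⟨d', hr', hpfin', _⟩ := hsmall 1 one_pos
    have hLtop : (⨅ d : D17 p φ, (p d.1.1 d.1.1 + d.1.2)) ≠ ∞ := by
      refine ne_top_of_le_ne_top ?_ (iInf_le _ d')
      rw [hr']
      exact ENNReal.add_ne_top.mpr ⟨hpfin', ENNReal.one_ne_top⟩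
    set L := ⨅ d : D17 p φ, (p d.1.1 d.1.1 + d.1.2) with hLdef
    refine ⟨L, ?_⟩
    rw [ENNReal.tendsto_nhds hLtop]
    intro ε hε
    set η := min ε 1 with hηdef
    have hη0 : 0 < η := lt_min hε one_pos
    have hηε : η ≤ ε := min_le_left _ _
    obtain ⟨d₀, hr0, hpfin0, hsm⟩ := hsmall η hη0
    have hL1 : (⨅ d : D17 p φ, (p d.1.1 d.1.1 + d.1.2)) < L + η := by
      rw [← hLdef]
      exact ENNReal.lt_add_right hLtop hη0.ne'
    obtain ⟨d₁, hd₁⟩ := iInf_lt_iff.mp hL1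
    obtain ⟨d₂, h20, h21⟩ := hdir d₀ d₁
    have hA : {e : D17 p φ | R17 p d₂.1 e.1} ∈ F17 p φ :=
      (iInf_le (fun d : D17 p φ => 𝓟 {e : D17 p φ | R17 p d.1 e.1}) d₂)
        (mem_principal_self _)
    have hprod : ∀ᶠ q : D17 p φ × D17 p φ in (F17 p φ) ×ˢ (F17 p φ),
        R17 p d₂.1 q.1.1 ∧ R17 p d₂.1 q.2.1 := by
      filter_upwards [prod_mem_prod hA hA] with q hq using hq
    rw [eventually_inf_principal]
    filter_upwards [hprod] with q hq hq2
    obtain ⟨he2, hg2⟩ := hq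
    have hq2' : R17 p q.1.1 q.2.1 := hq2
    constructor
    · -- lower bound
      have hgr : q.2.1.2 ≤ η := hsm q.2.1 (htrans d₀.1 d₂.1 q.2.1 h20 hg2)
      have hLg : L ≤ p q.2.1.1 q.2.1.1 + q.2.1.2 := iInf_le _ q.2
      have hkey : L ≤ p q.1.1.1 q.2.1.1 + η :=
        le_trans hLg (add_le_add (h1' q.1.1.1 q.2.1.1) hgr)
      calc L - ε ≤ L - η := tsub_le_tsub_left hηε L
        _ ≤ p q.1.1.1 q.2.1.1 := tsub_le_iff_right.mpr hkey
    · -- upper bound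
      calc p q.1.1.1 q.2.1.1 ≤ p q.1.1.1 q.2.1.1 + q.2.1.2 := le_self_add
        _ ≤ p q.1.1.1 q.1.1.1 + q.1.1.2 := hq2'
        _ ≤ p d₂.1.1 d₂.1.1 + d₂.1.2 := hV d₂.1 q.1.1 he2
        _ ≤ p d₁.1.1 d₁.1.1 + d₁.1.2 := hV d₁.1 d₂.1 h21
        _ ≤ L + η := hd₁.le
        _ ≤ L + ε := add_le_add_right hηε L
  · -- generation
    intro u
    apply le_antisymm
    · rw [le_iInf_iff]
      intro d
      apply ENNReal.le_of_forall_pos_le_add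
      intro ε hε _
      have hε' : (0 : ℝ≥0∞) < ε := ENNReal.coe_pos.mpr hε
      obtain ⟨d₀, hr0, hpfin0, hsm⟩ := hsmall ε hε'
      obtain ⟨g, hg0, hg1⟩ := hdir d₀ d
      have hgr : g.1.2 ≤ ε := hsm g.1 hg0
      have hsub : φ g.1.1 - p g.1.1 g.1.1 ≤ g.1.2 :=
        tsub_le_iff_right.mpr (le_of_lt (by rw [add_comm]; exact g.2))
      have step : φ u ≤ p u g.1.1 + g.1.2 :=
        le_trans (hw1 u g.1.1) (add_le_add_right hsub _)
      calc φ u ≤ p u g.1.1 + g.1.2 := step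
        _ ≤ (⨆ e : {e : D17 p φ // R17 p d.1 e.1}, p u e.1.1.1) + ε :=
            add_le_add (le_iSup (fun e : {e : D17 p φ // R17 p d.1 e.1} => p u e.1.1.1)
              ⟨g, hg1⟩) hgr
    · apply ENNReal.le_of_forall_pos_le_add
      intro ε hε hfin
      have hε' : (0 : ℝ≥0∞) < ε := ENNReal.coe_pos.mpr hε
      have hpu : p u u ≤ φ u := le_trans (le_max_left _ _) (hw2 u)
      have hd : φ u < p u u + ((φ u - p u u) + ε) := by
        rw [← add_assoc, add_tsub_cancel_of_le hpu]
        exact ENNReal.lt_add_right hfin.ne hε'.ne'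
      refine le_trans (iInf_le _ (⟨(u, (φ u - p u u) + ε), hd⟩ : D17 p φ)) ?_
      apply iSup_le
      rintro ⟨e, he⟩
      have he' : p u e.1.1 + e.1.2 ≤ p u u + ((φ u - p u u) + ε) := he
      calc p u e.1.1 ≤ p u e.1.1 + e.1.2 := le_self_add
        _ ≤ p u u + ((φ u - p u u) + ε) := he'
        _ = φ u + ε := by rw [← add_assoc, add_tsub_cancel_of_le hpu]
end

section
/- Let Q = ([0,1],&,1) with & a continuous t-norm having a non-trivial idempotent element a ∈ (0,1). Then the flat weight φ on the Q-category A = ([0,1],→) (where A(x,y) = x→y is the residuation) defined by φ(0) = 1 and φ(x) = a for x ∈ (0,1] is not forward Cauchy, i.e., there is no net {x_λ} with lim_{ν≥μ}(x_μ → x_ν) = 1 and φ = ⋁_λ ⋀_{σ≥λ} ((−) → x_σ). -/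
namespace Stmt19Aux

lemma m0 : (0:ℝ) ∈ Set.Icc (0:ℝ) 1 := ⟨le_refl 0, zero_le_one⟩
lemma m1 : (1:ℝ) ∈ Set.Icc (0:ℝ) 1 := ⟨zero_le_one, le_refl 1⟩

variable {f : ℝ → ℝ → ℝ}

lemma tn_zero_right (ht : IsContTNorm f) {x : ℝ} (hx : x ∈ Set.Icc (0:ℝ) 1) :
    f x 0 = 0 := by
  obtain ⟨hb, _, hc, _, hm, hu⟩ := ht
  have h1 : f x 0 ≤ f 1 0 := hm x hx 1 m1 0 m0 hx.2
  have h2 : f 1 0 = f 0 1 := hc 1 m1 0 m0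
  have h3 : f 0 1 = 0 := hu 0 m0
  have h4 := (hb x hx 0 m0).1
  linarith

lemma tn_mono_right (ht : IsContTNorm f) {x b c : ℝ} (hx : x ∈ Set.Icc (0:ℝ) 1)
    (hb : b ∈ Set.Icc (0:ℝ) 1) (hc : c ∈ Set.Icc (0:ℝ) 1) (hbc : b ≤ c) :
    f x b ≤ f x c := by
  obtain ⟨_, _, hcomm, _, hmono, _⟩ := ht
  rw [hcomm x hx b hb, hcomm x hx c hc]
  exact hmono b hb c hc x hx hbc

lemma tres_zero_mem (ht : IsContTNorm f) {x y : ℝ} (hx : x ∈ Set.Icc (0:ℝ) 1)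
    (hy : 0 ≤ y) : (0:ℝ) ∈ {z | z ∈ Set.Icc (0:ℝ) 1 ∧ f x z ≤ y} :=
  ⟨m0, by rw [tn_zero_right ht hx]; exact hy⟩

lemma tres_bddAbove {x y : ℝ} :
    BddAbove {z | z ∈ Set.Icc (0:ℝ) 1 ∧ f x z ≤ y} :=
  ⟨1, fun z hz => hz.1.2⟩

lemma tres_nonneg (ht : IsContTNorm f) {x y : ℝ} (hx : x ∈ Set.Icc (0:ℝ) 1)
    (hy : 0 ≤ y) : 0 ≤ tres f x y :=
  le_csSup tres_bddAbove (tres_zero_mem ht hx hy)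

lemma tres_le_one (ht : IsContTNorm f) {x y : ℝ} (hx : x ∈ Set.Icc (0:ℝ) 1)
    (hy : 0 ≤ y) : tres f x y ≤ 1 :=
  csSup_le ⟨0, tres_zero_mem ht hx hy⟩ (fun z hz => hz.1.2)

lemma tres_eq_one (ht : IsContTNorm f) {x y : ℝ} (hx : x ∈ Set.Icc (0:ℝ) 1)
    (hy : y ∈ Set.Icc (0:ℝ) 1) (hxy : x ≤ y) : tres f x y = 1 := by
  refine le_antisymm (tres_le_one ht hx hy.1) ?_
  refine le_csSup tres_bddAbove ⟨m1, ?_⟩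
  rw [ht.2.2.2.2.2 x hx]; exact hxy

lemma tres_gt (ht : IsContTNorm f) {x y c : ℝ} (hx : x ∈ Set.Icc (0:ℝ) 1)
    (hy : 0 ≤ y) (hc : c ∈ Set.Icc (0:ℝ) 1) (h : c < tres f x y) :
    f x c ≤ y := by
  obtain ⟨z, hz, hcz⟩ := exists_lt_of_lt_csSup ⟨0, tres_zero_mem ht hx hy⟩ h
  exact le_trans (tn_mono_right ht hx hc hz.1 hcz.le) hz.2

lemma tn_idem_min (ht : IsContTNorm f) {a : ℝ} (ha : a ∈ Set.Icc (0:ℝ) 1)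
    (hid : f a a = a) {x : ℝ} (hx : x ∈ Set.Icc (0:ℝ) 1) :
    f a x = min a x := by
  obtain ⟨hb, hcont, hcomm, hassoc, hmono, hu⟩ := ht
  rcases le_total a x with h | h
  · have h1 : f a x ≤ f a 1 := tn_mono_right ⟨hb, hcont, hcomm, hassoc, hmono, hu⟩ ha hx m1 hx.2
    have h2 : f a a ≤ f a x := tn_mono_right ⟨hb, hcont, hcomm, hassoc, hmono, hu⟩ ha ha hx h
    rw [hu a ha] at h1
    rw [hid] at h2
    rw [min_eq_left h]
    linarith
  · -- x ≤ a : show f a x = x using IVT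
    rw [min_eq_right h]
    have hg : ContinuousOn (fun t : ℝ => f a t) (Set.Icc (0:ℝ) 1) := by
      have : (fun t : ℝ => f a t) = (fun p : ℝ × ℝ => f p.1 p.2) ∘ (fun t => (a, t)) := rfl
      rw [this]
      exact hcont.comp (Continuous.continuousOn (continuous_const.prodMk continuous_id))
        (fun t htm => Set.mk_mem_prod ha htm)
    have hiv := intermediate_value_Icc (zero_le_one) hg
    have hx' : x ∈ Set.Icc (f a 0) (f a 1) := by
      rw [tn_zero_right ⟨hb, hcont, hcomm, hassoc, hmono, hu⟩ ha, hu a ha]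
      exact ⟨hx.1, h⟩
    obtain ⟨t, htm, htx⟩ := hiv hx'
    have htx' : f a t = x := htx
    have h2 : f a x = f a (f a t) := by rw [htx']
    rw [h2, ← hassoc a ha a ha t htm, hid, htx']

end Stmt19Aux

open Stmt19Aux

/-- if `a ∈ (0,1)` is a non-trivial idempotent of the continuous t-norm
`f`, then the flat weight `φ` on the Q-category `([0,1], →)` given by `φ(0) = 1` and
`φ(u) = a` for `u ∈ (0,1]` is not forward Cauchy: there is no forward Cauchy net
`{x_λ}` (i.e. with `⋁_λ ⋀_{ν ≥ μ ≥ λ} (x_μ → x_ν) = 1`) generating `φ`. -/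
theorem stmt19 (f : ℝ → ℝ → ℝ) (ht : IsContTNorm f)
    (a : ℝ) (ha : a ∈ Set.Ioo (0:ℝ) 1) (hid : f a a = a) :
    ¬ ∃ (Λ : Type) (le : Λ → Λ → Prop),
        (∀ l, le l l) ∧ (∀ i j k, le i j → le j k → le i k) ∧
        (∀ i j, ∃ k, le i k ∧ le j k) ∧ Nonempty Λ ∧
        ∃ x : Λ → {u : ℝ // u ∈ Set.Icc (0:ℝ) 1},
          -- forward Cauchy: ⋁_λ ⋀_{ν ≥ μ ≥ λ} A(x_μ, x_ν) = 1
          ((⨆ l : Λ, ⨅ q : {q : Λ × Λ // le l q.1 ∧ le q.1 q.2},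
              tres f (x q.1.1).1 (x q.1.2).1) = 1) ∧
          -- φ = ⋁_λ ⋀_{σ ≥ λ} ((−) → x_σ)
          (∀ u : {u : ℝ // u ∈ Set.Icc (0:ℝ) 1},
            (if u.1 = 0 then (1:ℝ) else a) =
              ⨆ l : Λ, ⨅ σ : {σ : Λ // le l σ}, tres f u.1 (x σ.1).1) := by
  rintro ⟨Λ, le, hrefl, htrans, hdir, ⟨l₁⟩, x, hC, hG⟩
  haveI : Nonempty Λ := ⟨l₁⟩
  have ha' : a ∈ Set.Icc (0:ℝ) 1 := ⟨ha.1.le, ha.2.le⟩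
  set X : Λ → ℝ := fun l => (x l).1 with hXdef
  have hX : ∀ l, X l ∈ Set.Icc (0:ℝ) 1 := fun l => (x l).2
  -- generic bounds for the inner infima in the generation condition
  have hGinf_nonneg : ∀ (u : ℝ), u ∈ Set.Icc (0:ℝ) 1 → ∀ l : Λ,
      (0:ℝ) ≤ ⨅ σ : {σ : Λ // le l σ}, tres f u (X σ.1) := by
    intro u hu l
    have : Nonempty {σ : Λ // le l σ} := ⟨⟨l, hrefl l⟩⟩
    exact le_ciInf (fun σ => tres_nonneg ht hu (hX σ.1).1)
  have hGinf_le_one : ∀ (u : ℝ), u ∈ Set.Icc (0:ℝ) 1 → ∀ l : Λ,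
      (⨅ σ : {σ : Λ // le l σ}, tres f u (X σ.1)) ≤ 1 := by
    intro u hu l
    exact ciInf_le_of_le ⟨0, by rintro r ⟨σ, rfl⟩; exact tres_nonneg ht hu (hX σ.1).1⟩
      ⟨l, hrefl l⟩ (tres_le_one ht hu (hX _).1)
  have hGbdd : ∀ (u : ℝ), u ∈ Set.Icc (0:ℝ) 1 →
      BddAbove (Set.range fun l : Λ => ⨅ σ : {σ : Λ // le l σ}, tres f u (X σ.1)) := by
    intro u hu
    exact ⟨1, by rintro r ⟨l, rfl⟩; exact hGinf_le_one u hu l⟩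
  -- forward Cauchy: find l₀ with all pairwise residuations > a
  have hCb : BddAbove (Set.range fun l : Λ =>
      ⨅ q : {q : Λ × Λ // le l q.1 ∧ le q.1 q.2}, tres f (X q.1.1) (X q.1.2)) := by
    refine ⟨1, ?_⟩
    rintro r ⟨l, rfl⟩
    exact ciInf_le_of_le ⟨0, by rintro r ⟨q, rfl⟩; exact tres_nonneg ht (hX _) (hX _).1⟩
      ⟨(l, l), hrefl l, hrefl l⟩ (tres_le_one ht (hX _) (hX _).1)
  have hlt : a < ⨆ l : Λ, ⨅ q : {q : Λ × Λ // le l q.1 ∧ le q.1 q.2},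
      tres f (X q.1.1) (X q.1.2) := by rw [hC]; exact ha.2
  obtain ⟨l₀, hl₀⟩ := exists_lt_of_lt_ciSup hlt
  have key : ∀ μ ν, le l₀ μ → le μ ν → min a (X μ) ≤ X ν := by
    intro μ ν hμ hν
    have h1 : a < tres f (X μ) (X ν) := by
      refine lt_of_lt_of_le hl₀ ?_
      have hbb : BddBelow (Set.range fun q : {q : Λ × Λ // le l₀ q.1 ∧ le q.1 q.2} =>
          tres f (X q.1.1) (X q.1.2)) :=
        ⟨0, by rintro r ⟨q, rfl⟩; exact tres_nonneg ht (hX _) (hX _).1⟩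
      exact ciInf_le hbb ⟨(μ, ν), hμ, hν⟩
    have h2 : f (X μ) a ≤ X ν := tres_gt ht (hX μ) (hX ν).1 ha' h1
    have h3 : f (X μ) a = f a (X μ) := ht.2.2.1 (X μ) (hX μ) a ha'
    rw [h3, tn_idem_min ht ha' hid (hX μ)] at h2
    exact h2
  -- all X μ with μ ≥ l₀ are 0
  have hzero : ∀ μ, le l₀ μ → X μ = 0 := by
    intro μ hμ
    by_contra hne
    have hpos : 0 < X μ := lt_of_le_of_ne (hX μ).1 (Ne.symm hne)
    set t : ℝ := min a (X μ) with htdef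
    have htpos : 0 < t := lt_min ha.1 hpos
    have htm : t ∈ Set.Icc (0:ℝ) 1 := ⟨htpos.le, le_trans (min_le_left _ _) ha.2.le⟩
    have hGt := hG ⟨t, htm⟩
    rw [if_neg (ne_of_gt htpos)] at hGt
    have hle : (⨅ σ : {σ : Λ // le μ σ}, tres f t (X σ.1)) ≤ a := by
      rw [hGt]
      exact le_ciSup (hGbdd t htm) μ
    have hlt1 : (⨅ σ : {σ : Λ // le μ σ}, tres f t (X σ.1)) < 1 :=
      lt_of_le_of_lt hle ha.2
    haveI : Nonempty {σ : Λ // le μ σ} := ⟨⟨μ, hrefl μ⟩⟩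
    obtain ⟨σ, hσ⟩ := exists_lt_of_ciInf_lt hlt1
    have : tres f t (X σ.1) = 1 := by
      by_contra _
      have hxt : X σ.1 < t := by
        by_contra hge
        push_neg at hge
        rw [tres_eq_one ht htm (hX σ.1) hge] at hσ
        exact lt_irrefl 1 hσ
      exact absurd (key μ σ.1 hμ σ.2) (not_le.mpr hxt)
    rw [this] at hσ
    exact lt_irrefl 1 hσ
  -- contradiction from generation at u = a
  have hGa := hG ⟨a, ha'⟩
  rw [if_neg (ne_of_gt ha.1)] at hGa
  have htres0 : tres f a 0 = 0 := by
    refine le_antisymm ?_ (tres_nonneg ht ha' le_rfl)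
    refine csSup_le ⟨0, tres_zero_mem ht ha' le_rfl⟩ ?_
    rintro z ⟨hz, hfz⟩
    rw [tn_idem_min ht ha' hid hz] at hfz
    rcases min_le_iff.mp hfz with h | h
    · exact absurd h (not_le.mpr ha.1)
    · exact h
  have hsup0 : (⨆ l : Λ, ⨅ σ : {σ : Λ // le l σ}, tres f a (X σ.1)) ≤ 0 := by
    refine ciSup_le ?_
    intro l
    obtain ⟨k, hlk, hl₀k⟩ := hdir l l₀
    have : (⨅ σ : {σ : Λ // le l σ}, tres f a (X σ.1)) ≤ tres f a (X k) :=
      ciInf_le (f := fun σ : {σ : Λ // le l σ} => tres f a (X σ.1)) ⟨0, by rintro r ⟨σ, rfl⟩; exact tres_nonneg ht ha' (hX _).1⟩ ⟨k, hlk⟩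
    rw [hzero k hl₀k, htres0] at this
    exact this
  rw [← hGa] at hsup0
  exact absurd hsup0 (not_le.mpr ha.1)
end
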